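/- For any connected graphs G and H, the vertex connectivity of the Cartesian product G □ H is at least min{δ(G), δ(H)}, where δ denotes minimum degree. -/

import Mathlib

open SimpleGraph Finset

section Aux
variable {α β : Type*} [Fintype α] [Fintype β]
  {G : SimpleGraph α} {H : SimpleGraph β}
  [DecidableRel G.Adj] [DecidableRel H.Adj] {S : Set (α × β)}

/-- Walk along a fixed row `y` in the box product, avoiding `S`. -/
lemma row_reach {g g' : α} {y : β} (w : G.Walk g g')
    (hw : ∀ x ∈ w.support, (x, y) ∉ S)
    (h1 : (g, y) ∈ Sᶜ) (h2 : (g', y) ∈ Sᶜ) :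
    ((G.boxProd H).induce Sᶜ).Reachable ⟨(g, y), h1⟩ ⟨(g', y), h2⟩ := by
  induction w with
  | nil => exact SimpleGraph.Reachable.refl _
  | @cons u v _ ha p ih =>
    have hv : (v, y) ∈ Sᶜ := hw v (by simp)
    have hadj : ((G.boxProd H).induce Sᶜ).Adj ⟨(u, y), h1⟩ ⟨(v, y), hv⟩ := by
      simp only [comap_adj, Function.Embedding.coe_subtype, boxProd_adj]
      exact Or.inl ⟨ha, trivial⟩
    exact hadj.reachable.trans (ih (fun x hx => hw x (by simp [hx])) hv h2)

lemma same_row (hSH : S.ncard < H.minDegree) (hG : G.Connected)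
    {a c : α} {b : β} (hu : (a, b) ∈ Sᶜ) (hv : (c, b) ∈ Sᶜ) :
    ((G.boxProd H).induce Sᶜ).Reachable ⟨(a, b), hu⟩ ⟨(c, b), hv⟩ := by
  obtain ⟨w⟩ := hG.preconnected a c
  have hfin : S.Finite := S.toFinite
  have hne : Nonempty α := hG.nonempty
  have key : ∃ y ∈ H.neighborFinset b, ∀ x ∈ w.support, (x, y) ∉ S := by
    by_contra hcon
    push_neg at hcon
    have hcon' : ∀ y : β, ∃ x, y ∈ H.neighborFinset b → (x, y) ∈ S := by
      intro y
      by_cases h : y ∈ H.neighborFinset b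
      · obtain ⟨x, _, hx2⟩ := hcon y h
        exact ⟨x, fun _ => hx2⟩
      · exact ⟨Classical.arbitrary α, fun h' => absurd h' h⟩
    choose f hf using hcon'
    have hcard : (H.neighborFinset b).card ≤ hfin.toFinset.card := by
      apply Finset.card_le_card_of_injOn (fun y => (f y, y))
      · intro y hy
        simpa using hf y hy
      · intro y1 _ y2 _ h
        exact congrArg Prod.snd h
    have : H.minDegree < H.minDegree := by
      calc H.minDegree ≤ H.degree b := H.minDegree_le_degree b
        _ = (H.neighborFinset b).card := rfl
        _ ≤ hfin.toFinset.card := hcard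
        _ = S.ncard := (Set.ncard_eq_toFinset_card S hfin).symm
        _ < H.minDegree := hSH
    exact absurd this (lt_irrefl _)
  obtain ⟨y, hy, hrow⟩ := key
  have hby : H.Adj b y := by simpa using hy
  have hay : (a, y) ∈ Sᶜ := hrow a w.start_mem_support
  have hcy : (c, y) ∈ Sᶜ := hrow c w.end_mem_support
  have h1 : ((G.boxProd H).induce Sᶜ).Adj ⟨(a, b), hu⟩ ⟨(a, y), hay⟩ := by
    simp only [comap_adj, Function.Embedding.coe_subtype, boxProd_adj]
    exact Or.inr ⟨hby, trivial⟩
  have h2 : ((G.boxProd H).induce Sᶜ).Adj ⟨(c, y), hcy⟩ ⟨(c, b), hv⟩ := by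
    simp only [comap_adj, Function.Embedding.coe_subtype, boxProd_adj]
    exact Or.inr ⟨hby.symm, trivial⟩
  exact h1.reachable.trans ((row_reach w hrow hay hcy).trans h2.reachable)

lemma step_row (hSG : S.ncard < G.minDegree) {a : α} {b h1 : β}
    (hab : (a, b) ∈ Sᶜ) (hbh : H.Adj b h1) :
    ∃ x, ∃ hx : (x, h1) ∈ Sᶜ,
      ((G.boxProd H).induce Sᶜ).Reachable ⟨(a, b), hab⟩ ⟨(x, h1), hx⟩ := by
  classical
  have hfin : S.Finite := S.toFinite
  have key : ∃ x ∈ G.neighborFinset a, (x, b) ∉ S ∧ (x, h1) ∉ S := by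
    by_contra hcon
    push_neg at hcon
    have hcard : (G.neighborFinset a).card ≤ hfin.toFinset.card := by
      apply Finset.card_le_card_of_injOn
        (fun x => if (x, b) ∈ S then (x, b) else (x, h1))
      · intro x hx
        by_cases h : (x, b) ∈ S
        · simp only [if_pos h, Finset.mem_coe, Set.Finite.mem_toFinset]; exact h
        · simp only [if_neg h, Finset.mem_coe, Set.Finite.mem_toFinset]; exact hcon x hx h
      · intro x1 _ x2 _ h
        have := congrArg Prod.fst h
        simpa [apply_ite Prod.fst] using this
    have : G.minDegree < G.minDegree := by
      calc G.minDegree ≤ G.degree a := G.minDegree_le_degree a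
        _ = (G.neighborFinset a).card := rfl
        _ ≤ hfin.toFinset.card := hcard
        _ = S.ncard := (Set.ncard_eq_toFinset_card S hfin).symm
        _ < G.minDegree := hSG
    exact absurd this (lt_irrefl _)
  obtain ⟨x, hx, hxb, hxh⟩ := key
  have hax : G.Adj a x := by simpa using hx
  refine ⟨x, hxh, ?_⟩
  have e1 : ((G.boxProd H).induce Sᶜ).Adj ⟨(a, b), hab⟩ ⟨(x, b), hxb⟩ := by
    simp only [comap_adj, Function.Embedding.coe_subtype, boxProd_adj]
    exact Or.inl ⟨hax, trivial⟩
  have e2 : ((G.boxProd H).induce Sᶜ).Adj ⟨(x, b), hxb⟩ ⟨(x, h1), hxh⟩ := by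
    simp only [comap_adj, Function.Embedding.coe_subtype, boxProd_adj]
    exact Or.inr ⟨hbh, trivial⟩
  exact e1.reachable.trans e2.reachable

lemma main_reach (hSG : S.ncard < G.minDegree) (hSH : S.ncard < H.minDegree)
    (hG : G.Connected) {b d : β} (w : H.Walk b d) :
    ∀ {a c : α} (hu : (a, b) ∈ Sᶜ) (hv : (c, d) ∈ Sᶜ),
      ((G.boxProd H).induce Sᶜ).Reachable ⟨(a, b), hu⟩ ⟨(c, d), hv⟩ := by
  induction w with
  | nil => exact fun hu hv => same_row hSH hG hu hv
  | @cons u v _ ha p ih =>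
    intro a c hu hv
    obtain ⟨x, hx, hr⟩ := step_row hSG hu ha
    exact hr.trans (ih hx hv)

end Aux



/-- `G` has vertex connectivity at least `k`: every set of vertices whose removal
leaves a graph that is not connected has at least `k` elements. -/
def HasConnectivityAtLeast {V : Type*} (G : SimpleGraph V) (k : ℕ) : Prop :=
  ∀ S : Set V, ¬ (G.induce Sᶜ).Connected → k ≤ S.ncard

/-- The vertex connectivity of the Cartesian (box) product of two connected graphs
is at least the minimum of their minimum degrees. -/
theorem connectivity_boxProd {α β : Type*} [Fintype α] [Fintype β]
    (G : SimpleGraph α) (H : SimpleGraph β)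
    [DecidableRel G.Adj] [DecidableRel H.Adj]
    (hG : G.Connected) (hH : H.Connected) :
    HasConnectivityAtLeast (G.boxProd H) (min G.minDegree H.minDegree) := by
  intro S hdis
  by_contra hlt
  push_neg at hlt
  have hSG : S.ncard < G.minDegree := lt_of_lt_of_le hlt (min_le_left _ _)
  have hSH : S.ncard < H.minDegree := lt_of_lt_of_le hlt (min_le_right _ _)
  have hna : Nonempty α := hG.nonempty
  have hnb : Nonempty β := hH.nonempty
  apply hdis
  have hcard : S.ncard < Fintype.card (α × β) := by
    obtain ⟨a⟩ := hna
    calc S.ncard < G.minDegree := hSG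
      _ ≤ G.degree a := G.minDegree_le_degree a
      _ < Fintype.card α := G.degree_lt_card_verts a
      _ ≤ Fintype.card (α × β) := by
          rw [Fintype.card_prod]
          exact Nat.le_mul_of_pos_right _ Fintype.card_pos
  have hne : ∃ v : α × β, v ∈ Sᶜ := by
    by_contra hc
    push_neg at hc
    have : S = Set.univ := by
      ext v
      simp only [Set.mem_univ, iff_true]
      by_contra hv
      exact hc v hv
    rw [this, Set.ncard_univ, Nat.card_eq_fintype_card] at hcard
    exact absurd hcard (lt_irrefl _)
  obtain ⟨v0, hv0⟩ := hne
  have hne' : Nonempty ↥(Sᶜ) := ⟨⟨v0, hv0⟩⟩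
  refine SimpleGraph.Connected.mk ?_
  rintro ⟨⟨a, b⟩, hu⟩ ⟨⟨c, d⟩, hv⟩
  obtain ⟨w⟩ := hH.preconnected b d
  exact main_reach hSG hSH hG w hu hv
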